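/- Let A be a unital C*-algebra and a, b, d ∈ A. Assume that a commutes with b and that b is normal (b*b = bb*). If the matrix [[a, b], [b*, d]] is a positive element of Mat₂(A), then the matrix [[a, b*], [b, d]] is also a positive element of Mat₂(A). -/

import Mathlib

open Matrix

/-- An element of `Mat₂(A)` is positive (as an element of the C*-algebra `Mat₂(A)`)
iff it is of the form `Nᴴ * N`. -/
def Mat2IsPositive {A : Type*} [Ring A] [StarRing A]
    (M : Matrix (Fin 2) (Fin 2) A) : Prop :=
  ∃ N : Matrix (Fin 2) (Fin 2) A, M = Nᴴ * N
set_option linter.unusedSectionVars false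
set_option maxHeartbeats 1000000

open Matrix

noncomputable section CStarMat2

open WithCStarModule CStarModule
open scoped InnerProductSpace

variable (A : Type*) [CStarAlgebra A] [PartialOrder A] [StarOrderedRing A]

/-- Type synonym for `2×2` matrices over `A`, which we endow with a C⋆-algebra structure. -/
abbrev Mat2C := CStarMatrix (Fin 2) (Fin 2) A

namespace Mat2C

variable {A}

/-- The underlying matrix. -/
def m (M : Mat2C A) : Matrix (Fin 2) (Fin 2) A := M

/-- Build an element from a matrix. -/
def ofM (M : Matrix (Fin 2) (Fin 2) A) : Mat2C A := M

@[simp] lemma m_ofM (M : Matrix (Fin 2) (Fin 2) A) : (ofM M).m = M := rfl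
lemma m_mul (M N : Mat2C A) : m (M * N) = M.m * N.m := rfl
lemma m_star (M : Mat2C A) : (star M).m = M.mᴴ := rfl
lemma m_add (M N : Mat2C A) : (M + N).m = M.m + N.m := rfl
lemma m_sub (M N : Mat2C A) : (M - N).m = M.m - N.m := rfl

lemma norm_le_sum (M : Mat2C A) : ‖M‖ ≤ ∑ i, ∑ j, ‖M.m i j‖ := by
  rw [CStarMatrix.norm_def]
  refine (CStarMatrix.toCLM M).opNorm_le_bound (by positivity) fun v => ?_
  rw [CStarMatrix.toCLM_apply_eq_sum]
  refine le_trans (pi_norm_le_sum_norm _) ?_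
  calc ∑ j, ‖((equiv A (Fin 2 → A)).symm (fun j => ∑ i, v i * M i j)) j‖
      ≤ ∑ j, ∑ i, ‖M.m i j‖ * ‖v‖ := by
        refine Finset.sum_le_sum fun j _ => ?_
        show ‖∑ i, v i * M i j‖ ≤ _
        refine le_trans (norm_sum_le _ _) (Finset.sum_le_sum fun i _ => ?_)
        refine le_trans (norm_mul_le _ _) ?_
        rw [mul_comm]
        exact mul_le_mul_of_nonneg_left (norm_apply_le_norm _ _) (norm_nonneg _)
    _ = (∑ i, ∑ j, ‖M.m i j‖) * ‖v‖ := by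
        simp only [Finset.sum_mul]
        exact Finset.sum_comm

instance : ContinuousFunctionalCalculus ℝ (Mat2C A) IsSelfAdjoint :=
  IsSelfAdjoint.instContinuousFunctionalCalculus
instance : NonUnitalContinuousFunctionalCalculus ℝ (Mat2C A) IsSelfAdjoint :=
  IsSelfAdjoint.instNonUnitalContinuousFunctionalCalculus
instance : NonnegSpectrumClass ℝ (Mat2C A) :=
  CStarAlgebra.instNonnegSpectrumClass
instance : ContinuousFunctionalCalculus NNReal (Mat2C A) (0 ≤ ·) :=
  Nonneg.instContinuousFunctionalCalculus
instance : NonUnitalContinuousFunctionalCalculus NNReal (Mat2C A) (0 ≤ ·) :=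
  Nonneg.instNonUnitalContinuousFunctionalCalculus

end Mat2C

end CStarMat2
section MainProof

open Mat2C
open scoped InnerProductSpace

variable {A : Type*} [CStarAlgebra A] [PartialOrder A] [StarOrderedRing A]

/-- A single-row matrix. -/
noncomputable def rowM (p q : A) : Mat2C A := ofM !![p, q; 0, 0]

lemma gram3 (p₁ p₂ p₃ q₁ q₂ q₃ : A) :
    star (rowM p₁ q₁) * rowM p₁ q₁ + star (rowM p₂ q₂) * rowM p₂ q₂
      + star (rowM p₃ q₃) * rowM p₃ q₃
    = ofM !![star p₁ * p₁ + star p₂ * p₂ + star p₃ * p₃,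
             star p₁ * q₁ + star p₂ * q₂ + star p₃ * q₃;
             star (star p₁ * q₁ + star p₂ * q₂ + star p₃ * q₃),
             star q₁ * q₁ + star q₂ * q₂ + star q₃ * q₃] := by
  have key : (!![p₁, q₁; 0, 0]ᴴ * !![p₁, q₁; 0, 0] + !![p₂, q₂; 0, 0]ᴴ * !![p₂, q₂; 0, 0]
      + !![p₃, q₃; 0, 0]ᴴ * !![p₃, q₃; 0, 0] : Matrix (Fin 2) (Fin 2) A)
      = !![star p₁ * p₁ + star p₂ * p₂ + star p₃ * p₃,
           star p₁ * q₁ + star p₂ * q₂ + star p₃ * q₃;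
           star (star p₁ * q₁ + star p₂ * q₂ + star p₃ * q₃),
           star q₁ * q₁ + star q₂ * q₂ + star q₃ * q₃] := by
    ext i j
    fin_cases i <;> fin_cases j <;>
      simp [Matrix.mul_apply, Fin.sum_univ_two, star_add]
  exact key

theorem key_thm (a b d : A)
    (hab : a * b = b * a) (hb : star b * b = b * star b)
    (h : Mat2IsPositive !![a, b; star b, d]) :
    Mat2IsPositive !![a, star b; b, d] := by
  obtain ⟨N, hN⟩ := h
  have ha : a = star (N 0 0) * N 0 0 + star (N 1 0) * N 1 0 := by
    have h00 := congrFun (congrFun hN 0) 0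
    simpa [Matrix.mul_apply, Fin.sum_univ_two] using h00
  have hbN : b = star (N 0 0) * N 0 1 + star (N 1 0) * N 1 1 := by
    have h01 := congrFun (congrFun hN 0) 1
    simpa [Matrix.mul_apply, Fin.sum_univ_two] using h01
  have hd : d = star (N 0 1) * N 0 1 + star (N 1 1) * N 1 1 := by
    have h11' := congrFun (congrFun hN 1) 1
    simpa [Matrix.mul_apply, Fin.sum_univ_two] using h11'
  set x := N 0 0 with hxd
  set y := N 0 1 with hyd
  set z := N 1 0 with hzd
  set w := N 1 1 with hwd
  have sa : star a = a := by
    rw [ha]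
    simp only [star_add, StarMul.star_mul, star_star]
  have ha0 : 0 ≤ a := by
    rw [ha]
    exact add_nonneg (star_mul_self_nonneg x) (star_mul_self_nonneg z)
  have hab' : star b * a = a * star b := by
    have h1 := congrArg star hab
    rw [StarMul.star_mul, StarMul.star_mul, sa] at h1
    exact h1
  set T' : Mat2C A := ofM !![a, star b; b, d] with hT'def
  have Pos : ∀ n : ℕ, 0 ≤ ofM !![a + ((n : ℂ) + 1)⁻¹ • 1, star b; b, d] := by
    intro n
    set εC : ℂ := ((n : ℂ) + 1)⁻¹ with hεC
    have hεC0 : εC ≠ 0 := inv_ne_zero (Nat.cast_add_one_ne_zero n)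
    set εo : A := εC • 1 with hεo
    set sε : A := ((Real.sqrt ((n : ℝ) + 1)⁻¹ : ℝ) : ℂ) • (1 : A) with hsε
    have hsεsε : star sε * sε = εo := by
      rw [hsε, star_smul, star_one, Complex.star_def, Complex.conj_ofReal,
        smul_mul_assoc, one_mul, smul_smul]
      rw [hεo]
      congr 1
      rw [← Complex.ofReal_mul, Real.mul_self_sqrt (by positivity)]
      push_cast
      ring
    have hεo0 : 0 ≤ εo := by rw [← hsεsε]; exact star_mul_self_nonneg sε
    have hεoc : ∀ t : A, εo * t = t * εo := fun t => by
      rw [hεo, smul_mul_assoc, mul_smul_comm, one_mul, mul_one]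
    have hεos : star εo = εo := by rw [← hsεsε, StarMul.star_mul, star_star]
    have hu : IsUnit (a + εo) := by
      refine CStarAlgebra.isUnit_of_le εo (le_add_of_nonneg_left ha0) ⟨hεo0, ?_⟩
      have h2 : εo = algebraMap ℂ A εC := by rw [hεo, Algebra.algebraMap_eq_smul_one]
      rw [h2]
      exact (isUnit_iff_ne_zero.mpr hεC0).map (algebraMap ℂ A)
    set e : A := ↑hu.unit⁻¹ with he
    have he1 : (a + εo) * e = 1 := by rw [he]; exact hu.mul_val_inv
    have he2 : e * (a + εo) = 1 := by rw [he]; exact hu.val_inv_mul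
    have hba : b * (a + εo) = (a + εo) * b := by
      rw [mul_add, add_mul, ← hab, hεoc b]
    have hsba : star b * (a + εo) = (a + εo) * star b := by
      rw [mul_add, add_mul, hab', hεoc (star b)]
    have hbe : b * e = e * b := by
      have hcu : Commute b ↑hu.unit := by rw [hu.unit_spec]; exact hba
      exact (hcu.units_inv_right).eq
    have hsbe : star b * e = e * star b := by
      have hcu : Commute (star b) ↑hu.unit := by rw [hu.unit_spec]; exact hsba
      exact (hcu.units_inv_right).eq
    have hes : star e = e := by
      have h2 := congrArg star he1
      rw [StarMul.star_mul, star_add, sa, hεos, star_one] at h2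
      calc star e = star e * ((a + εo) * e) := by rw [he1, mul_one]
        _ = (star e * (a + εo)) * e := by rw [mul_assoc]
        _ = e := by rw [h2, one_mul]
    set β : A := star b - b with hβ
    have hβe : e * β = β * e := by rw [hβ, mul_sub, sub_mul, hbe, hsbe]
    obtain ⟨c, hc⟩ : ∃ c : A, c = e * β := ⟨_, rfl⟩
    have hstarc : star c = -c := by
      rw [hc, StarMul.star_mul, hes, hβ, star_sub, star_star,
        show b - star b = -β from by rw [hβ]; exact (neg_sub _ _).symm,
        neg_mul, ← hβe, ← hc]
    set q1 : A := y + x * c with hq1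
    set q2 : A := w + z * c with hq2
    set q3 : A := sε * c with hq3
    have h11 : star x * x + star z * z + star sε * sε = a + εo := by
      rw [hsεsε, ← ha]
    have hac : (a + εo) * c = β := by rw [hc, ← mul_assoc, he1, one_mul]
    have hQ : star b * β + (-(β * b) + -(β * β)) = 0 := by
      rw [hβ]
      have hbb : b * star b = star b * b := hb.symm
      calc star b * (star b - b) + (-((star b - b) * b) + -((star b - b) * (star b - b)))
          = b * star b - star b * b := by noncomm_ring
        _ = 0 := by rw [hbb, sub_self]
    have h12 : star x * q1 + star z * q2 + star sε * q3 = star b := by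
      have expand : star x * q1 + star z * q2 + star sε * q3
          = (star x * y + star z * w)
            + (star x * x + star z * z + star sε * sε) * c := by
        rw [hq1, hq2, hq3]
        noncomm_ring
      rw [expand, h11, hac, ← hbN, hβ]
      abel
    have hsbN : star y * x + star w * z = star b := by
      have h2 := congrArg star hbN
      rw [star_add, StarMul.star_mul, StarMul.star_mul, star_star, star_star] at h2
      exact h2.symm
    have h22 : star q1 * q1 + star q2 * q2 + star q3 * q3 = d := by
      have expand : star q1 * q1 + star q2 * q2 + star q3 * q3
          = (star y * y + star w * w)
            + ((star y * x + star w * z) * c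
            + (star c * (star x * y + star z * w)
            + star c * ((star x * x + star z * z + star sε * sε) * c))) := by
        rw [hq1, hq2, hq3]
        simp only [star_add, StarMul.star_mul]
        noncomm_ring
      rw [expand, h11, hac, ← hbN, ← hd, hsbN]
      have hS : star b * c + (star c * b + star c * β) = 0 := by
        rw [hstarc, hc]
        have t1 : star b * (e * β) = e * (star b * β) := by
          rw [← mul_assoc, hsbe, mul_assoc]
        calc star b * (e * β) + (-(e * β) * b + -(e * β) * β)
            = e * (star b * β) + (e * -(β * b) + e * -(β * β)) := by
              rw [t1]; noncomm_ring
          _ = e * (star b * β + (-(β * b) + -(β * β))) := by rw [mul_add, mul_add]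
          _ = e * 0 := by rw [hQ]
          _ = 0 := mul_zero e
      rw [hS, add_zero]
    have hgram := gram3 (A := A) x z sε q1 q2 q3
    have hPn : ofM (A := A) !![a + εo, star b; b, d]
        = star (rowM x q1) * rowM x q1 + star (rowM z q2) * rowM z q2
          + star (rowM sε q3) * rowM sε q3 := by
      rw [hgram, h11, h12, h22, star_star]
    rw [hPn]
    exact add_nonneg (add_nonneg (star_mul_self_nonneg _) (star_mul_self_nonneg _))
      (star_mul_self_nonneg _)
  have hdist : ∀ n : ℕ,
      dist (ofM (A := A) !![a + ((n : ℂ) + 1)⁻¹ • 1, star b; b, d]) T'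
        ≤ ((n : ℝ) + 1)⁻¹ * ‖(1 : A)‖ := by
    intro n
    rw [dist_eq_norm]
    have hdiffm : (ofM (A := A) !![a + ((n : ℂ) + 1)⁻¹ • 1, star b; b, d]) - T'
        = ofM !![((n : ℂ) + 1)⁻¹ • 1, 0; 0, 0] := by
      show (!![a + ((n : ℂ) + 1)⁻¹ • 1, star b; b, d] - !![a, star b; b, d]
        : Matrix (Fin 2) (Fin 2) A) = !![((n : ℂ) + 1)⁻¹ • 1, 0; 0, 0]
      ext i j
      fin_cases i <;> fin_cases j <;> simp
    rw [hdiffm]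
    refine le_trans (norm_le_sum _) ?_
    have hεnorm : ‖(((n : ℂ) + 1)⁻¹ : ℂ)‖ = ((n : ℝ) + 1)⁻¹ := by
      rw [norm_inv, show ((n : ℂ) + 1) = ((n + 1 : ℕ) : ℂ) from by push_cast; ring,
        Complex.norm_natCast]
      push_cast
      ring
    simp [Fin.sum_univ_two, norm_smul, hεnorm]
  have htend : Filter.Tendsto (fun n : ℕ => ofM (A := A) !![a + ((n : ℂ) + 1)⁻¹ • 1, star b; b, d])
      Filter.atTop (nhds T') := by
    rw [tendsto_iff_dist_tendsto_zero]
    have hlim : Filter.Tendsto (fun n : ℕ => ((n : ℝ) + 1)⁻¹ * ‖(1 : A)‖)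
        Filter.atTop (nhds 0) := by
      have h2 := tendsto_one_div_add_atTop_nhds_zero_nat.mul_const ‖(1 : A)‖
      simpa [one_div] using h2
    exact squeeze_zero (fun n => dist_nonneg) hdist hlim
  have h0 : (0 : Mat2C A) ≤ T' := by
    have hmem := (CStarAlgebra.isClosed_nonneg (A := Mat2C A)).mem_of_tendsto htend
      (Filter.Eventually.of_forall fun n => Pos n)
    exact hmem
  refine ⟨Mat2C.m (CFC.sqrt T'), ?_⟩
  have hsa : star (CFC.sqrt T') = CFC.sqrt T' :=
    (IsSelfAdjoint.of_nonneg (CFC.sqrt_nonneg _)).star_eq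
  have hss : T' = star (CFC.sqrt T') * CFC.sqrt T' := by
    rw [hsa, CFC.sqrt_mul_sqrt_self T' h0]
  exact congrArg Mat2C.m hss

end MainProof

theorem stmt_6 {A : Type*} [CStarAlgebra A] (a b d : A)
    (hab : a * b = b * a) (hb : star b * b = b * star b)
    (h : Mat2IsPositive !![a, b; star b, d]) :
    Mat2IsPositive !![a, star b; b, d] := by
  letI : PartialOrder A := CStarAlgebra.spectralOrder A
  letI : StarOrderedRing A := CStarAlgebra.spectralOrderedRing A
  exact key_thm a b d hab hb h
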